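/- arXiv:1811.11438 — 2 statements merged into one kernel-verified Lean document; each statement's English description precedes it below -/
import Mathlib

section
/- Let $n, k$ be positive integers with $n \geq 2k+1$, and let $A, B$ be two $k$-element subsets of $\{1, \ldots, n\}$ with $|A \cap B| = c$. Then in the Kneser graph $KG(n,k)$ there is a walk from $A$ to $B$ of length exactly $2\lceil c/(n-2k) \rceil + 1$. -/
/-- The Kneser graph `KG(n,k)`. -/
def kneserGraph (n k : ℕ) : SimpleGraph {A : Finset (Fin n) // A.card = k} where
  Adj X Y := X ≠ Y ∧ Disjoint X.1 Y.1
  symm := ⟨fun _ _ h => ⟨h.1.symm, h.2.symm⟩⟩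
  loopless := ⟨fun _ h => h.1 rfl⟩

lemma kneser_adj {n k : ℕ} (hk : 0 < k) (X Y : {A : Finset (Fin n) // A.card = k})
    (h : Disjoint X.1 Y.1) : (kneserGraph n k).Adj X Y := by
  refine ⟨?_, h⟩
  rintro rfl
  have h1 : X.1 = ⊥ := disjoint_self.mp h
  have h2 := X.2
  rw [h1] at h2
  simp at h2
  omega

lemma ceil_toNat_eq (c d : ℕ) (hd : 0 < d) :
    (⌈(c : ℚ) / (d : ℚ)⌉).toNat = (c + d - 1) / d := by
  set m : ℕ := (c + d - 1) / d with hm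
  have h1 : m * d ≤ c + d - 1 := Nat.div_mul_le_self _ _
  have h2 : c + d - 1 < (m + 1) * d := by
    rw [← Nat.div_lt_iff_lt_mul hd]
    omega
  rw [add_one_mul] at h2
  have hle : c ≤ m * d := by omega
  have hlt : m * d < c + d := by omega
  have hd0 : (0:ℚ) < (d:ℚ) := by exact_mod_cast hd
  have hceil : ⌈(c : ℚ) / (d : ℚ)⌉ = (m : ℤ) := by
    rw [Int.ceil_eq_iff]
    constructor
    · rw [lt_div_iff₀ hd0]
      have : (m:ℚ) * d < (c:ℚ) + d := by exact_mod_cast hlt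
      push_cast
      linarith
    · rw [div_le_iff₀ hd0]
      exact_mod_cast hle
  rw [hceil]
  simp

lemma kneser_walk_aux (n k d : ℕ) (hk : 0 < k) (hd : 0 < d) (hnd : n = 2 * k + d) :
    ∀ c : ℕ, ∀ A B : Finset (Fin n), ∀ hA : A.card = k, ∀ hB : B.card = k,
      (A ∩ B).card = c →
      ∃ w : (kneserGraph n k).Walk ⟨A, hA⟩ ⟨B, hB⟩,
        w.length = 2 * ((c + d - 1) / d) + 1 := by
  intro c
  induction c using Nat.strong_induction_on with
  | _ c ih =>
    intro A B hA hB hc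
    rcases Nat.eq_zero_or_pos c with hc0 | hcpos
    · -- base case: A and B are disjoint
      subst hc0
      have hdisj : Disjoint A B := by
        rw [Finset.disjoint_iff_inter_eq_empty, ← Finset.card_eq_zero]
        exact hc
      refine ⟨SimpleGraph.Walk.cons (kneser_adj hk _ _ hdisj) SimpleGraph.Walk.nil, ?_⟩
      simp
      omega
    · -- inductive step
      have hcard : Fintype.card (Fin n) = n := Fintype.card_fin n
      have hcA : c ≤ k := by
        rw [← hc, ← hA]; exact Finset.card_le_card Finset.inter_subset_left
      have hBA : (B \ A).card = k - c := by
        have := Finset.card_sdiff_add_card_inter B A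
        rw [Finset.inter_comm, hc, hB] at this
        omega
      have hAc : Aᶜ.card = n - k := by
        rw [Finset.card_compl, hcard, hA]
      -- choose C with B \ A ⊆ C ⊆ Aᶜ, |C| = k
      have hsub : B \ A ⊆ Aᶜ := by
        intro x hx
        simp only [Finset.mem_sdiff] at hx
        simp [hx.2]
      obtain ⟨C, hBAC, hCAc, hCcard⟩ :=
        Finset.exists_subsuperset_card_eq (n := k) hsub (by rw [hBA]; omega)
          (by rw [hAc]; omega)
      have hdisjAC : Disjoint A C := by
        rw [Finset.disjoint_left]
        intro x hxA hxC
        have := hCAc hxC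
        simp at this
        exact this hxA
      have hBC : B ∩ C = B \ A := by
        apply Finset.Subset.antisymm
        · intro x hx
          simp only [Finset.mem_inter] at hx
          have := hCAc hx.2
          simp at this
          simp [hx.1, this]
        · intro x hx
          simp only [Finset.mem_sdiff] at hx
          exact Finset.mem_inter.mpr ⟨hx.1, hBAC (by simp [hx.1, hx.2])⟩
      have hCcB : (Cᶜ \ B).card = n - k - c := by
        have h1 := Finset.card_sdiff_add_card_inter Cᶜ B
        have h2 : (Cᶜ ∩ B).card = c := by
          have h3 := Finset.card_sdiff_add_card_inter B C
          rw [hBC, hBA, hB] at h3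
          rw [Finset.inter_comm]
          have h4 : (B ∩ Cᶜ).card = B.card - (B ∩ C).card := by
            rw [← Finset.sdiff_eq_inter_compl]
            have := Finset.card_sdiff_add_card_inter B C
            omega
          rw [h4, hBC, hBA, hB]
          omega
        rw [Finset.card_compl, hcard, hCcard] at h1
        omega
      -- choose T ⊆ A ∩ B with card c - d
      obtain ⟨T, hTsub, hTcard⟩ := Finset.exists_subset_card_eq
        (show c - d ≤ (A ∩ B).card by omega)
      -- choose S ⊆ Cᶜ \ B with card k - (c - d)
      obtain ⟨S, hSsub, hScard⟩ := Finset.exists_subset_card_eq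
        (show k - (c - d) ≤ (Cᶜ \ B).card by omega)
      have hTS : Disjoint T S := by
        rw [Finset.disjoint_left]
        intro x hxT hxS
        have h1 : x ∈ B := (Finset.mem_inter.mp (hTsub hxT)).2
        have h2 := hSsub hxS
        simp only [Finset.mem_sdiff] at h2
        exact h2.2 h1
      set A' := T ∪ S with hA'def
      have hA'card : A'.card = k := by
        rw [hA'def, Finset.card_union_of_disjoint hTS, hTcard, hScard]
        omega
      have hA'B : A' ∩ B = T := by
        rw [hA'def, Finset.union_inter_distrib_right]
        have h1 : T ∩ B = T := Finset.inter_eq_left.mpr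
          (fun x hx => (Finset.mem_inter.mp (hTsub hx)).2)
        have h2 : S ∩ B = ∅ := by
          rw [← Finset.disjoint_iff_inter_eq_empty, Finset.disjoint_left]
          intro x hxS
          have := hSsub hxS
          simp only [Finset.mem_sdiff] at this
          exact this.2
        rw [h1, h2, Finset.union_empty]
      have hdisjCA' : Disjoint C A' := by
        rw [Finset.disjoint_right]
        intro x hx
        rw [hA'def, Finset.mem_union] at hx
        rcases hx with hx | hx
        · have hxA : x ∈ A := (Finset.mem_inter.mp (hTsub hx)).1
          exact fun hxC => (Finset.disjoint_left.mp hdisjAC hxA) hxC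
        · have := hSsub hx
          simp only [Finset.mem_sdiff, Finset.mem_compl] at this
          exact this.1
      obtain ⟨w', hw'⟩ := ih (c - d) (by omega) A' B hA'card hB (by rw [hA'B]; omega)
      refine ⟨SimpleGraph.Walk.cons (kneser_adj hk _ ⟨C, hCcard⟩ hdisjAC)
        (SimpleGraph.Walk.cons (kneser_adj hk _ ⟨A', hA'card⟩ hdisjCA') w'), ?_⟩
      simp only [SimpleGraph.Walk.length_cons, hw']
      have harith : (c + d - 1) / d = (c - d + d - 1) / d + 1 := by
        rcases Nat.lt_or_ge c d with h | h
        · have h1 : c - d = 0 := by omega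
          have e1 : (0 + d - 1) / d = 0 := Nat.div_eq_of_lt (by omega)
          have e2 : (c + d - 1) / d = 1 := Nat.div_eq_of_lt_le (by omega) (by omega)
          rw [h1, e1, e2]
        · have h1 : c + d - 1 = (c - d + d - 1) + d := by omega
          rw [h1, Nat.add_div_right _ hd]
      rw [harith]
      ring

/-- In `KG(n,k)` with `n ≥ 2k+1`, between any two vertices `A, B` with
`|A ∩ B| = c` there is a walk of (odd) length `2⌈c/(n-2k)⌉ + 1`. -/
theorem kneser_odd_path (n k c : ℕ) (hk : 0 < k) (hn : 2 * k + 1 ≤ n)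
    (A B : Finset (Fin n)) (hA : A.card = k) (hB : B.card = k)
    (hc : (A ∩ B).card = c) :
    ∃ w : (kneserGraph n k).Walk ⟨A, hA⟩ ⟨B, hB⟩,
      w.length = 2 * (⌈(c : ℚ) / ((n : ℚ) - 2 * k)⌉).toNat + 1 := by
  have hd : 0 < n - 2 * k := by omega
  have hcast : ((n : ℚ) - 2 * k) = ((n - 2 * k : ℕ) : ℚ) := by
    rw [Nat.cast_sub (by omega : 2 * k ≤ n)]
    push_cast
    ring
  rw [hcast, ceil_toNat_eq c (n - 2 * k) hd]
  exact kneser_walk_aux n k (n - 2 * k) hk hd (by omega) c A B hA hB hc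
end

section
/- Let $k$ be a positive integer and let $n = 2k+1$. The girth of the bipartite Kneser graph $B(n,k)$ equals $6$; that is, $B(2k+1,k)$ contains a cycle of length $6$ and contains no cycle of length less than $6$. -/
/-- The bipartite Kneser graph `B(n,k)`. -/
def bipartiteKneser (n k : ℕ) :
    SimpleGraph ({A : Finset (Fin n) // A.card = k} × Bool) where
  Adj X Y := X.2 ≠ Y.2 ∧ Disjoint X.1.1 Y.1.1
  symm := ⟨fun _ _ h => ⟨h.1.symm, h.2.symm⟩⟩
  loopless := ⟨fun _ h => h.1 rfl⟩


lemma bk_parity {n k : ℕ} {u v : {A : Finset (Fin n) // A.card = k} × Bool}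
    (w : (bipartiteKneser n k).Walk u v) : (u.2 = v.2) ↔ Even w.length := by
  induction w with
  | nil => simp
  | @cons a b c h p ih =>
    have hne : a.2 ≠ b.2 := And.left h
    simp only [SimpleGraph.Walk.length_cons, Nat.even_add_one, ← ih]
    cases ha : a.2 <;> cases hb : b.2 <;> cases hc : c.2 <;> simp_all

lemma unique_disjoint {k : ℕ} (A B C D : Finset (Fin (2 * k + 1)))
    (hA : A.card = k) (hB : B.card = k) (hC : C.card = k) (hD : D.card = k)
    (hAB : A ≠ B) (hCA : Disjoint C A) (hCB : Disjoint C B)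
    (hDA : Disjoint D A) (hDB : Disjoint D B) : C = D := by
  have hU : k + 1 ≤ (A ∪ B).card := by
    by_contra h
    push_neg at h
    have h1 : A = A ∪ B := Finset.eq_of_subset_of_card_le Finset.subset_union_left
      (by rw [hA]; omega)
    have h2 : B ⊆ A := h1 ▸ Finset.subset_union_right
    exact hAB ((Finset.eq_of_subset_of_card_le h2 (by rw [hA, hB])).symm)
  have hcompl : ((A ∪ B)ᶜ).card ≤ k := by
    have h2 := Finset.card_add_card_compl (A ∪ B)
    rw [Fintype.card_fin] at h2
    omega
  have hCsub : C ⊆ (A ∪ B)ᶜ := by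
    intro x hx
    simp only [Finset.mem_compl, Finset.mem_union]
    rintro (h | h)
    · exact (Finset.disjoint_left.mp hCA) hx h
    · exact (Finset.disjoint_left.mp hCB) hx h
  have hDsub : D ⊆ (A ∪ B)ᶜ := by
    intro x hx
    simp only [Finset.mem_compl, Finset.mem_union]
    rintro (h | h)
    · exact (Finset.disjoint_left.mp hDA) hx h
    · exact (Finset.disjoint_left.mp hDB) hx h
  have h1 : C = (A ∪ B)ᶜ := Finset.eq_of_subset_of_card_le hCsub (by rw [hC]; exact hcompl)
  have h2 : D = (A ∪ B)ᶜ := Finset.eq_of_subset_of_card_le hDsub (by rw [hD]; exact hcompl)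
  rw [h1, h2]

lemma no_four_cycle {k : ℕ} (v : {A : Finset (Fin (2 * k + 1)) // A.card = k} × Bool)
    (w : (bipartiteKneser (2 * k + 1) k).Walk v v) (hc : w.IsCycle) (hl : w.length = 4) :
    False := by
  cases w with
  | nil => simp at hl
  | cons h1 p =>
    cases p with
    | nil => simp at hl
    | cons h2 p =>
      cases p with
      | nil => simp at hl
      | cons h3 p =>
        cases p with
        | nil => simp at hl
        | cons h4 p =>
          have h0 : p.length = 0 := by simp only [SimpleGraph.Walk.length_cons] at hl; omega
          have := SimpleGraph.Walk.eq_of_length_eq_zero h0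
          subst this
          rw [SimpleGraph.Walk.length_eq_zero_iff, SimpleGraph.Walk.nil_iff_eq_nil] at h0
          subst h0
          rename_i x1 x2 x3 v
          -- support tail nodup
          have hnd := hc.2
          simp [SimpleGraph.Walk.support_cons, List.nodup_cons] at hnd
          -- vertices: v, x1, x2, x3
          -- adjacencies
          have e1 := h1  -- v ~ x1
          have e2 := h2  -- x1 ~ x2
          have e3 := h3
          have e4 := h4
          obtain ⟨hb1, d1⟩ := e1
          obtain ⟨hb2, d2⟩ := e2
          obtain ⟨hb3, d3⟩ := e3
          obtain ⟨hb4, d4⟩ := e4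
          have hvx2 : v.1.1 ≠ x2.1.1 := by
            intro hEq
            have : v = x2 := by
              have hb : v.2 = x2.2 := by
                cases hv : v.2 <;> cases h1 : x1.2 <;> cases h2 : x2.2 <;> simp_all
              exact Prod.ext (Subtype.ext hEq) hb
            exact hnd.2.1.2 this.symm
          have hx13 : x1.1.1 ≠ x3.1.1 := by
            intro hEq
            have : x1 = x3 := by
              have hb : x1.2 = x3.2 := by
                cases hv : v.2 <;> cases h1 : x1.2 <;> cases h2 : x2.2 <;> cases h3' : x3.2 <;> simp_all
              exact Prod.ext (Subtype.ext hEq) hb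
            exact hnd.1.2.1 this
          exact hx13 (unique_disjoint v.1.1 x2.1.1 x1.1.1 x3.1.1 v.1.2 x2.1.2 x1.1.2 x3.1.2
            hvx2 d1.symm d2 d4 d3.symm)

lemma exists_six_cycle (k : ℕ) (hk : 0 < k) :
    ∃ (v : {A : Finset (Fin (2 * k + 1)) // A.card = k} × Bool)
      (w : (bipartiteKneser (2 * k + 1) k).Walk v v), w.IsCycle ∧ w.length = 6 := by
  have hb0 : ∀ m ∈ Finset.range k, m < 2*k+1 := by intro m hm; simp at hm; omega
  have hb1 : ∀ m ∈ Finset.Ico k (2*k), m < 2*k+1 := by intro m hm; simp at hm; omega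
  have hb2 : ∀ m ∈ insert (2*k) (Finset.range (k-1)), m < 2*k+1 := by
    intro m hm; simp at hm; omega
  have hb3 : ∀ m ∈ Finset.Ico (k-1) (2*k-1), m < 2*k+1 := by intro m hm; simp at hm; omega
  have hb4 : ∀ m ∈ insert (2*k-1) (Finset.range (k-1)), m < 2*k+1 := by
    intro m hm; simp at hm; omega
  have hb5 : ∀ m ∈ insert (2*k) (Finset.Ico k (2*k-1)), m < 2*k+1 := by
    intro m hm; simp at hm; omega
  set A0 : Finset (Fin (2*k+1)) := (Finset.range k).attachFin hb0 with hA0def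
  set B0 : Finset (Fin (2*k+1)) := (Finset.Ico k (2*k)).attachFin hb1 with hB0def
  set A1 : Finset (Fin (2*k+1)) := (insert (2*k) (Finset.range (k-1))).attachFin hb2 with hA1def
  set B1 : Finset (Fin (2*k+1)) := (Finset.Ico (k-1) (2*k-1)).attachFin hb3 with hB1def
  set A2 : Finset (Fin (2*k+1)) := (insert (2*k-1) (Finset.range (k-1))).attachFin hb4 with hA2def
  set B2 : Finset (Fin (2*k+1)) := (insert (2*k) (Finset.Ico k (2*k-1))).attachFin hb5 with hB2def
  have cA0 : A0.card = k := by rw [hA0def, Finset.card_attachFin, Finset.card_range]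
  have cB0 : B0.card = k := by rw [hB0def, Finset.card_attachFin, Nat.card_Ico]; omega
  have cA1 : A1.card = k := by
    rw [hA1def, Finset.card_attachFin, Finset.card_insert_of_notMem
      (by simp only [Finset.mem_range]; omega), Finset.card_range]
    omega
  have cB1 : B1.card = k := by rw [hB1def, Finset.card_attachFin, Nat.card_Ico]; omega
  have cA2 : A2.card = k := by
    rw [hA2def, Finset.card_attachFin, Finset.card_insert_of_notMem
      (by simp only [Finset.mem_range]; omega), Finset.card_range]
    omega
  have cB2 : B2.card = k := by
    rw [hB2def, Finset.card_attachFin, Finset.card_insert_of_notMem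
      (by simp only [Finset.mem_Ico]; omega), Nat.card_Ico]
    omega
  -- membership
  have mA0 : ∀ a : Fin (2*k+1), a ∈ A0 ↔ (a:ℕ) < k := by
    intro a; rw [hA0def, Finset.mem_attachFin]; simp
  have mB0 : ∀ a : Fin (2*k+1), a ∈ B0 ↔ k ≤ (a:ℕ) ∧ (a:ℕ) < 2*k := by
    intro a; rw [hB0def, Finset.mem_attachFin]; simp
  have mA1 : ∀ a : Fin (2*k+1), a ∈ A1 ↔ ((a:ℕ) = 2*k ∨ (a:ℕ) < k-1) := by
    intro a; rw [hA1def, Finset.mem_attachFin]; simp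
  have mB1 : ∀ a : Fin (2*k+1), a ∈ B1 ↔ k-1 ≤ (a:ℕ) ∧ (a:ℕ) < 2*k-1 := by
    intro a; rw [hB1def, Finset.mem_attachFin]; simp
  have mA2 : ∀ a : Fin (2*k+1), a ∈ A2 ↔ ((a:ℕ) = 2*k-1 ∨ (a:ℕ) < k-1) := by
    intro a; rw [hA2def, Finset.mem_attachFin]; simp
  have mB2 : ∀ a : Fin (2*k+1), a ∈ B2 ↔ ((a:ℕ) = 2*k ∨ (k ≤ (a:ℕ) ∧ (a:ℕ) < 2*k-1)) := by
    intro a; rw [hB2def, Finset.mem_attachFin]; simp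
  -- disjointness edges
  have dis : ∀ (S T : Finset (Fin (2*k+1))) (p q : Fin (2*k+1) → Prop),
      (∀ a, a ∈ S ↔ p a) → (∀ a, a ∈ T ↔ q a) → (∀ a, p a → q a → False) → Disjoint S T := by
    intro S T p q hS hT h
    rw [Finset.disjoint_left]
    intro a haS haT
    exact h a ((hS a).mp haS) ((hT a).mp haT)
  have e01 : Disjoint A0 B0 := dis _ _ _ _ mA0 mB0 (fun a h1 h2 => by omega)
  have e12 : Disjoint B0 A1 := dis _ _ _ _ mB0 mA1 (fun a h1 h2 => by omega)
  have e23 : Disjoint A1 B1 := dis _ _ _ _ mA1 mB1 (fun a h1 h2 => by omega)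
  have e34 : Disjoint B1 A2 := dis _ _ _ _ mB1 mA2 (fun a h1 h2 => by omega)
  have e45 : Disjoint A2 B2 := dis _ _ _ _ mA2 mB2 (fun a h1 h2 => by omega)
  have e50 : Disjoint B2 A0 := dis _ _ _ _ mB2 mA0 (fun a h1 h2 => by omega)
  -- distinctness
  have ne_gen : ∀ (S T : Finset (Fin (2*k+1))) (hS : S.card = k) (hT : T.card = k)
      (b c : Bool), (S ≠ T ∨ b ≠ c) →
      ((⟨S, hS⟩, b) : {A : Finset (Fin (2*k+1)) // A.card = k} × Bool) ≠ (⟨T, hT⟩, c) := by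
    intro S T hS hT b c hor h
    rcases hor with h1 | h1
    · exact h1 (congrArg (fun x => x.1.1) h)
    · exact h1 (congrArg Prod.snd h)
  have nA01 : A0 ≠ A1 := by
    intro h
    have h1 : (⟨k-1, by omega⟩ : Fin (2*k+1)) ∈ A0 := (mA0 _).mpr (show k-1 < k by omega)
    have h2 : k-1 = 2*k ∨ k-1 < k-1 := (mA1 _).mp ((Finset.ext_iff.mp h _).mp h1)
    omega
  have nA02 : A0 ≠ A2 := by
    intro h
    have h1 : (⟨k-1, by omega⟩ : Fin (2*k+1)) ∈ A0 := (mA0 _).mpr (show k-1 < k by omega)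
    have h2 : k-1 = 2*k-1 ∨ k-1 < k-1 := (mA2 _).mp ((Finset.ext_iff.mp h _).mp h1)
    omega
  have nA12 : A1 ≠ A2 := by
    intro h
    have h1 : (⟨2*k, by omega⟩ : Fin (2*k+1)) ∈ A1 := (mA1 _).mpr (show 2*k = 2*k ∨ 2*k < k-1 from Or.inl rfl)
    have h2 : 2*k = 2*k-1 ∨ 2*k < k-1 := (mA2 _).mp ((Finset.ext_iff.mp h _).mp h1)
    omega
  have nB01 : B0 ≠ B1 := by
    intro h
    have h1 : (⟨2*k-1, by omega⟩ : Fin (2*k+1)) ∈ B0 := (mB0 _).mpr (show k ≤ 2*k-1 ∧ 2*k-1 < 2*k by omega)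
    have h2 : k-1 ≤ 2*k-1 ∧ 2*k-1 < 2*k-1 := (mB1 _).mp ((Finset.ext_iff.mp h _).mp h1)
    omega
  have nB02 : B0 ≠ B2 := by
    intro h
    have h1 : (⟨2*k-1, by omega⟩ : Fin (2*k+1)) ∈ B0 := (mB0 _).mpr (show k ≤ 2*k-1 ∧ 2*k-1 < 2*k by omega)
    have h2 : 2*k-1 = 2*k ∨ (k ≤ 2*k-1 ∧ 2*k-1 < 2*k-1) := (mB2 _).mp ((Finset.ext_iff.mp h _).mp h1)
    omega
  have nB12 : B1 ≠ B2 := by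
    intro h
    have h1 : (⟨k-1, by omega⟩ : Fin (2*k+1)) ∈ B1 := (mB1 _).mpr (show k-1 ≤ k-1 ∧ k-1 < 2*k-1 by omega)
    have h2 : k-1 = 2*k ∨ (k ≤ k-1 ∧ k-1 < 2*k-1) := (mB2 _).mp ((Finset.ext_iff.mp h _).mp h1)
    omega
  -- vertices
  refine ⟨(⟨A0, cA0⟩, false), ?_⟩
  have a01 : (bipartiteKneser (2*k+1) k).Adj (⟨A0, cA0⟩, false) (⟨B0, cB0⟩, true) := And.intro (by simp) e01
  have a12 : (bipartiteKneser (2*k+1) k).Adj (⟨B0, cB0⟩, true) (⟨A1, cA1⟩, false) := And.intro (by simp) e12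
  have a23 : (bipartiteKneser (2*k+1) k).Adj (⟨A1, cA1⟩, false) (⟨B1, cB1⟩, true) := And.intro (by simp) e23
  have a34 : (bipartiteKneser (2*k+1) k).Adj (⟨B1, cB1⟩, true) (⟨A2, cA2⟩, false) := And.intro (by simp) e34
  have a45 : (bipartiteKneser (2*k+1) k).Adj (⟨A2, cA2⟩, false) (⟨B2, cB2⟩, true) := And.intro (by simp) e45
  have a50 : (bipartiteKneser (2*k+1) k).Adj (⟨B2, cB2⟩, true) (⟨A0, cA0⟩, false) := And.intro (by simp) e50
  refine ⟨.cons a01 (.cons a12 (.cons a23 (.cons a34 (.cons a45 (.cons a50 .nil))))), ?_, by simp⟩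
  have n01 := ne_gen A0 B0 cA0 cB0 false true (Or.inr (by simp))
  have n02 := ne_gen A0 A1 cA0 cA1 false false (Or.inl nA01)
  have n03 := ne_gen A0 B1 cA0 cB1 false true (Or.inr (by simp))
  have n04 := ne_gen A0 A2 cA0 cA2 false false (Or.inl nA02)
  have n05 := ne_gen A0 B2 cA0 cB2 false true (Or.inr (by simp))
  have n12 := ne_gen B0 A1 cB0 cA1 true false (Or.inr (by simp))
  have n13 := ne_gen B0 B1 cB0 cB1 true true (Or.inl nB01)
  have n14 := ne_gen B0 A2 cB0 cA2 true false (Or.inr (by simp))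
  have n15 := ne_gen B0 B2 cB0 cB2 true true (Or.inl nB02)
  have n23 := ne_gen A1 B1 cA1 cB1 false true (Or.inr (by simp))
  have n24 := ne_gen A1 A2 cA1 cA2 false false (Or.inl nA12)
  have n25 := ne_gen A1 B2 cA1 cB2 false true (Or.inr (by simp))
  have n34 := ne_gen B1 A2 cB1 cA2 true false (Or.inr (by simp))
  have n35 := ne_gen B1 B2 cB1 cB2 true true (Or.inl nB12)
  have n45 := ne_gen A2 B2 cA2 cB2 false true (Or.inr (by simp))
  rw [SimpleGraph.Walk.isCycle_def]
  refine ⟨?_, by simp, ?_⟩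
  · rw [SimpleGraph.Walk.isTrail_def]
    simp only [SimpleGraph.Walk.edges_cons, SimpleGraph.Walk.edges_nil, List.nodup_cons,
      List.mem_cons, List.not_mem_nil, List.nodup_nil, or_false, and_true, not_or, Sym2.eq_iff]
    simp [n01, n02, n03, n04, n05, n12, n13, n14, n15, n23, n24, n25, n34, n35, n45, Ne.symm n01, Ne.symm n02, Ne.symm n03, Ne.symm n04, Ne.symm n05, Ne.symm n12, Ne.symm n13, Ne.symm n14, Ne.symm n15, Ne.symm n23, Ne.symm n24, Ne.symm n25, Ne.symm n34, Ne.symm n35, Ne.symm n45]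
  · simp only [SimpleGraph.Walk.support_cons, SimpleGraph.Walk.support_nil, List.tail_cons,
      List.nodup_cons, List.mem_cons, List.not_mem_nil, List.nodup_nil, or_false, and_true, not_or]
    simp [n01, n02, n03, n04, n05, n12, n13, n14, n15, n23, n24, n25, n34, n35, n45, Ne.symm n01, Ne.symm n02, Ne.symm n03, Ne.symm n04, Ne.symm n05, Ne.symm n12, Ne.symm n13, Ne.symm n14, Ne.symm n15, Ne.symm n23, Ne.symm n24, Ne.symm n25, Ne.symm n34, Ne.symm n35, Ne.symm n45]

/-- For `n = 2k+1`, the girth of the bipartite Kneser graph `B(n,k)` equals 6: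
it contains a cycle of length 6 and no shorter cycle. -/
theorem bipartiteKneser_girth_eq_six (k : ℕ) (hk : 0 < k) :
    (∃ (v : {A : Finset (Fin (2 * k + 1)) // A.card = k} × Bool)
       (w : (bipartiteKneser (2 * k + 1) k).Walk v v), w.IsCycle ∧ w.length = 6) ∧
    (∀ (v : {A : Finset (Fin (2 * k + 1)) // A.card = k} × Bool)
       (w : (bipartiteKneser (2 * k + 1) k).Walk v v), w.IsCycle → 6 ≤ w.length) := by
  constructor
  · exact exists_six_cycle k hk
  · intro v w hc
    have h3 := hc.three_le_length
    have hev : Even w.length := (bk_parity w).mp rfl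
    by_contra h
    push_neg at h
    obtain ⟨m, hm⟩ := hev
    have h4 : w.length = 4 := by omega
    exact no_four_cycle v w hc h4
end
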